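/- Let λ>0. There exists C>0 such that for all x,y>0 with y < x/2 or y > 2x: ( ∫_0^∞ | t D_{λ,x}* P_t^{λ+1}(x,y) |² dt/t )^{1/2} ≤ C / max(x,y). -/

import Mathlib

open MeasureTheory Real Set

noncomputable section

/-- The Bessel Poisson kernel `P_t^λ(x,y)`. -/
def besselPoissonKernel (lam t x y : ℝ) : ℝ :=
  (2 * lam * (x * y) ^ lam * t / π) *
    ∫ θ in Set.Ioo 0 π,
      Real.sin θ ^ (2 * lam - 1) /
        ((x - y) ^ 2 + t ^ 2 + 2 * x * y * (1 - Real.cos θ)) ^ (lam + 1)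

/-- The Bessel Poisson integral `P_t^λ(f)(x)`. -/
def besselPoisson (lam : ℝ) (f : ℝ → ℂ) (t x : ℝ) : ℂ :=
  ∫ y in Set.Ioi (0 : ℝ), (besselPoissonKernel lam t x y : ℂ) * f y

/-- The differential operator `D_λ* = -x^{-λ} (d/dx) x^λ`. -/
def DlamStar (lam : ℝ) (g : ℝ → ℂ) (x : ℝ) : ℂ :=
  -(((x ^ (-lam) : ℝ)) : ℂ) * deriv (fun u => ((u ^ lam : ℝ) : ℂ) * g u) x



def Dfn (y t θ u : ℝ) : ℝ := (u - y) ^ 2 + t ^ 2 + 2 * u * y * (1 - Real.cos θ)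

lemma Dfn_hasDerivAt (y t θ u : ℝ) :
    HasDerivAt (fun u => Dfn y t θ u) (2 * (u - y) + 2 * y * (1 - Real.cos θ)) u := by
  have h1 : HasDerivAt (fun u : ℝ => (u - y) ^ 2) (2 * (u - y)) u := by
    simpa using ((hasDerivAt_id' u).sub_const y).fun_pow 2
  have h2 : HasDerivAt (fun u : ℝ => 2 * u * y * (1 - Real.cos θ))
      (2 * y * (1 - Real.cos θ)) u := by
    simpa using (((hasDerivAt_id' u).const_mul 2).mul_const y).mul_const (1 - Real.cos θ)
  exact (h1.add_const (t ^ 2)).fun_add h2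

lemma Dfn_pos {y t u : ℝ} (ht : 0 < t) (hu : 0 ≤ u) (hy : 0 ≤ y) (θ : ℝ) :
    0 < Dfn y t θ u := by
  have hc : Real.cos θ ≤ 1 := Real.cos_le_one θ
  have h1 : 0 ≤ 2 * u * y * (1 - Real.cos θ) := by
    have : (0:ℝ) ≤ 1 - Real.cos θ := by linarith
    positivity
  have h2 : 0 ≤ (u - y) ^ 2 := sq_nonneg _
  have h3 : 0 < t ^ 2 := by positivity
  unfold Dfn; linarith

lemma Dfn_ge {y t u : ℝ} (hu : 0 ≤ u) (hy : 0 ≤ y) (θ : ℝ) :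
    (u - y) ^ 2 + t ^ 2 ≤ Dfn y t θ u := by
  have hc : Real.cos θ ≤ 1 := Real.cos_le_one θ
  have h1 : 0 ≤ 2 * u * y * (1 - Real.cos θ) := by
    have : (0:ℝ) ≤ 1 - Real.cos θ := by linarith
    positivity
  unfold Dfn; linarith

lemma Dfn_ge' {y t u : ℝ} (hu : 0 ≤ u) (hy : 0 ≤ y) (θ : ℝ) :
    t ^ 2 ≤ Dfn y t θ u := by
  have := Dfn_ge (t := t) hu hy θ
  have := sq_nonneg (u - y)
  linarith

/-- derivative of the per-θ integrand -/
lemma integrand_hasDerivAt (y t θ : ℝ) (s p : ℝ) {u : ℝ} (hD : 0 < Dfn y t θ u) :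
    HasDerivAt (fun u => s * ((Dfn y t θ u) ^ p)⁻¹)
      (s * (-(p * (Dfn y t θ u) ^ (p - 1) * (2 * (u - y) + 2 * y * (1 - Real.cos θ))) /
        ((Dfn y t θ u) ^ p) ^ 2)) u := by
  have h := (((Dfn_hasDerivAt y t θ u).rpow_const (Or.inl hD.ne')).fun_inv
    (Real.rpow_pos_of_pos hD p).ne').const_mul s
  refine h.congr_deriv ?_
  ring

def Ider (y t p q : ℝ) (u θ : ℝ) : ℝ :=
  Real.sin θ ^ q *
    (-(p * (Dfn y t θ u) ^ (p - 1) * (2 * (u - y) + 2 * y * (1 - Real.cos θ))) /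
      ((Dfn y t θ u) ^ p) ^ 2)

lemma rpow_ratio {D : ℝ} (hD : 0 < D) (p : ℝ) :
    D ^ (p - 1) / (D ^ p) ^ 2 = D ^ (-(p + 1)) := by
  rw [← Real.rpow_natCast (D ^ p) 2, ← Real.rpow_mul hD.le, ← Real.rpow_sub hD]
  congr 1
  push_cast; ring

lemma Ider_abs_le {y t p q u θ : ℝ} (hp : 0 < p) (hq : 0 ≤ q)
    (hθ : θ ∈ Set.Ioo 0 π) (hD : 0 < Dfn y t θ u) {E : ℝ} (hE : 0 < E)
    (hED : E ≤ Dfn y t θ u) :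
    |Ider y t p q u θ| ≤ p * E ^ (-(p + 1)) * |2 * (u - y) + 2 * y * (1 - Real.cos θ)| := by
  have hs0 : 0 ≤ Real.sin θ := Real.sin_nonneg_of_nonneg_of_le_pi hθ.1.le hθ.2.le
  have hs1 : Real.sin θ ^ q ≤ 1 := Real.rpow_le_one hs0 (Real.sin_le_one θ) hq
  have hsq0 : 0 ≤ Real.sin θ ^ q := Real.rpow_nonneg hs0 q
  have hDp : 0 < (Dfn y t θ u) ^ (p - 1) := Real.rpow_pos_of_pos hD _
  have hDen : 0 < ((Dfn y t θ u) ^ p) ^ 2 := by positivity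
  have key : |Ider y t p q u θ| =
      Real.sin θ ^ q * (p * (Dfn y t θ u) ^ (p - 1) *
        |2 * (u - y) + 2 * y * (1 - Real.cos θ)|) / ((Dfn y t θ u) ^ p) ^ 2 := by
    unfold Ider
    rw [abs_mul, abs_div, abs_of_nonneg hsq0, abs_neg, abs_of_nonneg hDen.le,
      abs_mul, abs_mul, abs_of_nonneg hp.le, abs_of_nonneg hDp.le]
    ring
  rw [key]
  calc Real.sin θ ^ q * (p * (Dfn y t θ u) ^ (p - 1) *
        |2 * (u - y) + 2 * y * (1 - Real.cos θ)|) / ((Dfn y t θ u) ^ p) ^ 2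
      ≤ 1 * (p * (Dfn y t θ u) ^ (p - 1) *
        |2 * (u - y) + 2 * y * (1 - Real.cos θ)|) / ((Dfn y t θ u) ^ p) ^ 2 := by
        gcongr
    _ = p * ((Dfn y t θ u) ^ (p - 1) / ((Dfn y t θ u) ^ p) ^ 2) *
        |2 * (u - y) + 2 * y * (1 - Real.cos θ)| := by ring
    _ = p * (Dfn y t θ u) ^ (-(p + 1)) *
        |2 * (u - y) + 2 * y * (1 - Real.cos θ)| := by rw [rpow_ratio hD]
    _ ≤ p * E ^ (-(p + 1)) * |2 * (u - y) + 2 * y * (1 - Real.cos θ)| := by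
        have h := Real.rpow_le_rpow_of_nonpos hE hED (by linarith : -(p + 1) ≤ 0)
        gcongr

lemma Fint_abs_le {y t p q u θ : ℝ} (hp : 0 < p) (hq : 0 ≤ q)
    (hθ : θ ∈ Set.Ioo 0 π) (hD : 0 < Dfn y t θ u) {E : ℝ} (hE : 0 < E)
    (hED : E ≤ Dfn y t θ u) :
    |Real.sin θ ^ q * ((Dfn y t θ u) ^ p)⁻¹| ≤ E ^ (-p) := by
  have hs0 : 0 ≤ Real.sin θ := Real.sin_nonneg_of_nonneg_of_le_pi hθ.1.le hθ.2.le
  have hs1 : Real.sin θ ^ q ≤ 1 := Real.rpow_le_one hs0 (Real.sin_le_one θ) hq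
  have hsq0 : 0 ≤ Real.sin θ ^ q := Real.rpow_nonneg hs0 q
  have hDp : 0 < (Dfn y t θ u) ^ p := Real.rpow_pos_of_pos hD _
  rw [abs_mul, abs_of_nonneg hsq0, abs_of_nonneg (inv_nonneg.mpr hDp.le)]
  calc Real.sin θ ^ q * ((Dfn y t θ u) ^ p)⁻¹ ≤ 1 * ((Dfn y t θ u) ^ p)⁻¹ := by gcongr
    _ = (Dfn y t θ u) ^ (-p) := by rw [one_mul, ← Real.rpow_neg hD.le]
    _ ≤ E ^ (-p) := Real.rpow_le_rpow_of_nonpos hE hED (by linarith : -p ≤ 0)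

lemma Dfn_contθ (y t u : ℝ) : Continuous fun θ => Dfn y t θ u := by
  unfold Dfn; continuity

lemma ballpos {x u : ℝ} (hu : u ∈ Metric.ball x (x / 2)) : x / 2 < u ∧ u < 3 * x / 2 := by
  rw [Metric.mem_ball, Real.dist_eq, abs_lt] at hu
  constructor <;> linarith [hu.1, hu.2]

lemma I_hasDerivAt (y t p q : ℝ) (hy : 0 < y) (ht : 0 < t) (hq : 0 ≤ q) (hp : 0 < p)
    {x : ℝ} (hx : 0 < x) :
    HasDerivAt (fun u => ∫ θ in Set.Ioo 0 π, Real.sin θ ^ q * ((Dfn y t θ u) ^ p)⁻¹)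
      (∫ θ in Set.Ioo 0 π, Ider y t p q x θ) x := by
  have hsin : Continuous fun θ : ℝ => Real.sin θ ^ q :=
    Real.continuous_sin.rpow_const fun θ => Or.inr hq
  have hDpos : ∀ {u : ℝ}, 0 < u → ∀ θ, 0 < Dfn y t θ u :=
    fun hu θ => Dfn_pos ht hu.le hy.le θ
  have hFm : ∀ u : ℝ, 0 < u → AEStronglyMeasurable
      (fun θ => Real.sin θ ^ q * ((Dfn y t θ u) ^ p)⁻¹) (volume.restrict (Set.Ioo 0 π)) := by
    intro u hu
    refine (hsin.mul ?_).aestronglyMeasurable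
    exact (((Dfn_contθ y t u).rpow_const fun θ => Or.inl (hDpos hu θ).ne').inv₀
      fun θ => (Real.rpow_pos_of_pos (hDpos hu θ) p).ne')
  have hF'm : AEStronglyMeasurable (fun θ => Ider y t p q x θ)
      (volume.restrict (Set.Ioo 0 π)) := by
    refine Continuous.aestronglyMeasurable ?_
    unfold Ider
    refine hsin.mul (Continuous.div ?_ ?_ ?_)
    · exact (((continuous_const.mul (((Dfn_contθ y t x)).rpow_const
        fun θ => Or.inl (hDpos hx θ).ne')).mul (by continuity))).neg
    · exact ((((Dfn_contθ y t x)).rpow_const fun θ => Or.inl (hDpos hx θ).ne')).pow 2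
    · intro θ
      exact pow_ne_zero 2 (Real.rpow_pos_of_pos (hDpos hx θ) p).ne'
  have hconst : ∀ c : ℝ, Integrable (fun _ : ℝ => c) (volume.restrict (Set.Ioo 0 π)) :=
    fun c => integrableOn_const measure_Ioo_lt_top.ne
  have hE : 0 < t ^ 2 := by positivity
  have hF_int : Integrable (fun θ => Real.sin θ ^ q * ((Dfn y t θ x) ^ p)⁻¹)
      (volume.restrict (Set.Ioo 0 π)) := by
    refine (hconst ((t ^ 2) ^ (-p))).mono' (hFm x hx) ?_
    filter_upwards [ae_restrict_mem measurableSet_Ioo] with θ hθ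
    exact Fint_abs_le hp hq hθ (hDpos hx θ) hE (Dfn_ge' hx.le hy.le θ)
  have key := hasDerivAt_integral_of_dominated_loc_of_deriv_le
    (F := fun u θ => Real.sin θ ^ q * ((Dfn y t θ u) ^ p)⁻¹)
    (F' := fun u θ => Ider y t p q u θ)
    (bound := fun _ : ℝ => p * (t ^ 2) ^ (-(p + 1)) * (2 * (3 * x / 2 + y) + 4 * y))
    (Metric.ball_mem_nhds x (half_pos hx))
    (by filter_upwards [eventually_gt_nhds (show 0 < x from hx) ] with u hu using hFm u hu)
    hF_int hF'm ?_ (hconst _) ?_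
  · exact key.2
  · -- bound
    filter_upwards [ae_restrict_mem measurableSet_Ioo] with θ hθ
    intro u hu
    obtain ⟨hu1, hu2⟩ := ballpos hu
    have hupos : 0 < u := lt_trans (by positivity) hu1
    have h1 := Ider_abs_le (u := u) (θ := θ) hp hq hθ (hDpos hupos θ) hE
      (Dfn_ge' hupos.le hy.le θ)
    refine h1.trans ?_
    have hcos : Real.cos θ ≤ 1 := Real.cos_le_one θ
    have hcos2 : -1 ≤ Real.cos θ := Real.neg_one_le_cos θ
    have habs : |2 * (u - y) + 2 * y * (1 - Real.cos θ)| ≤ 2 * (3 * x / 2 + y) + 4 * y := by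
      rw [abs_le]
      constructor <;> nlinarith
    have hrp : (0:ℝ) ≤ p * (t ^ 2) ^ (-(p + 1)) := by positivity
    exact mul_le_mul_of_nonneg_left habs hrp
  · -- differentiability
    filter_upwards [ae_restrict_mem measurableSet_Ioo] with θ hθ
    intro u hu
    obtain ⟨hu1, hu2⟩ := ballpos hu
    have hupos : 0 < u := lt_trans (by positivity) hu1
    exact integrand_hasDerivAt y t θ _ p (hDpos hupos θ)

lemma volIoo : (volume (Set.Ioo (0:ℝ) π)).toReal = π := by
  rw [Real.volume_Ioo, ENNReal.toReal_ofReal (by linarith [Real.pi_pos] : (0:ℝ) ≤ π - 0)]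
  ring

lemma Iint_bound {y t p q x : ℝ} (hy : 0 < y) (ht : 0 < t) (hq : 0 ≤ q) (hp : 0 < p)
    (hx : 0 < x) :
    |∫ θ in Set.Ioo 0 π, Real.sin θ ^ q * ((Dfn y t θ x) ^ p)⁻¹| ≤
      π * ((x - y) ^ 2 + t ^ 2) ^ (-p) := by
  have hQ : 0 < (x - y) ^ 2 + t ^ 2 := by positivity
  have h := norm_integral_le_of_norm_le
    (f := fun θ => Real.sin θ ^ q * ((Dfn y t θ x) ^ p)⁻¹)
    (g := fun _ => ((x - y) ^ 2 + t ^ 2) ^ (-p))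
    ((integrableOn_const measure_Ioo_lt_top.ne :
      IntegrableOn (fun _ => ((x - y) ^ 2 + t ^ 2) ^ (-p)) (Set.Ioo 0 π) volume)) ?_
  · rw [Real.norm_eq_abs] at h
    refine h.trans ?_
    rw [setIntegral_const, smul_eq_mul, measureReal_def, volIoo]
  · filter_upwards [ae_restrict_mem measurableSet_Ioo] with θ hθ
    rw [Real.norm_eq_abs]
    exact Fint_abs_le hp hq hθ (Dfn_pos ht hx.le hy.le θ) hQ (Dfn_ge hx.le hy.le θ)

lemma Ider_int_bound {y t p q x M : ℝ} (hy : 0 < y) (ht : 0 < t) (hq : 0 ≤ q) (hp : 0 < p)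
    (hx : 0 < x) (hxyM : |x - y| ≤ M) (hyM : y ≤ M) :
    |∫ θ in Set.Ioo 0 π, Ider y t p q x θ| ≤
      π * (p * ((x - y) ^ 2 + t ^ 2) ^ (-(p + 1)) * (6 * M)) := by
  have hQ : 0 < (x - y) ^ 2 + t ^ 2 := by positivity
  have h := norm_integral_le_of_norm_le
    (f := fun θ => Ider y t p q x θ)
    (g := fun _ => p * ((x - y) ^ 2 + t ^ 2) ^ (-(p + 1)) * (6 * M))
    ((integrableOn_const measure_Ioo_lt_top.ne :
      IntegrableOn (fun _ => p * ((x - y) ^ 2 + t ^ 2) ^ (-(p + 1)) * (6 * M)) (Set.Ioo 0 π) volume)) ?_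
  · rw [Real.norm_eq_abs] at h
    refine h.trans ?_
    rw [setIntegral_const, smul_eq_mul, measureReal_def, volIoo]
  · filter_upwards [ae_restrict_mem measurableSet_Ioo] with θ hθ
    rw [Real.norm_eq_abs]
    refine (Ider_abs_le hp hq hθ (Dfn_pos ht hx.le hy.le θ) hQ
      (Dfn_ge hx.le hy.le θ)).trans ?_
    have hcos : Real.cos θ ≤ 1 := Real.cos_le_one θ
    have hcos2 : -1 ≤ Real.cos θ := Real.neg_one_le_cos θ
    have habs : |2 * (x - y) + 2 * y * (1 - Real.cos θ)| ≤ 6 * M := by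
      have h1 : |x - y| ≤ M := hxyM
      rw [abs_le] at h1 ⊢
      constructor <;> nlinarith [h1.1, h1.2]
    have hrp : (0:ℝ) ≤ p * ((x - y) ^ 2 + t ^ 2) ^ (-(p + 1)) := by positivity
    exact mul_le_mul_of_nonneg_left habs hrp

lemma psi_facts (lam a : ℝ) (hlam : 0 < lam) (ha : 0 < a) :
    IntegrableOn (fun t : ℝ => t ^ 3 * ((a ^ 2 + t ^ 2) ^ (-(2 * lam + 4)))) (Set.Ioi 0) ∧
    ∫ t in Set.Ioi (0:ℝ), t ^ 3 * ((a ^ 2 + t ^ 2) ^ (-(2 * lam + 4))) ≤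
      (1 / 4 + 1 / (4 * lam + 4)) * a ^ (-(4 * lam + 4)) := by
  set ψ : ℝ → ℝ := fun t => t ^ 3 * ((a ^ 2 + t ^ 2) ^ (-(2 * lam + 4))) with hψ
  have hbase : ∀ t : ℝ, (0:ℝ) < a ^ 2 + t ^ 2 := fun t => by positivity
  have hcont : Continuous ψ := by
    refine (continuous_pow 3).mul ?_
    exact (continuous_const.add (continuous_pow 2)).rpow_const fun t => Or.inl (hbase t).ne'
  have hbound : ∀ t : ℝ, a < t → ψ t ≤ t ^ (-(4 * lam + 5)) := by
    intro t htmem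
    have htpos : 0 < t := lt_trans ha htmem
    have h1 : (a ^ 2 + t ^ 2) ^ (-(2 * lam + 4)) ≤ (t ^ 2) ^ (-(2 * lam + 4)) :=
      Real.rpow_le_rpow_of_nonpos (by positivity) (by nlinarith [sq_nonneg a]) (by linarith)
    have h2 : ψ t ≤ t ^ 3 * (t ^ 2) ^ (-(2 * lam + 4)) := by
      rw [hψ]
      exact mul_le_mul_of_nonneg_left h1 (by positivity)
    refine h2.trans_eq ?_
    rw [← Real.rpow_natCast t 3, ← Real.rpow_natCast t 2, ← Real.rpow_mul htpos.le,
      ← Real.rpow_add htpos]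
    congr 1
    push_cast; ring
  have I1 : IntegrableOn ψ (Set.Ioc 0 a) := hcont.integrableOn_Ioc
  have I2 : IntegrableOn ψ (Set.Ioi a) := by
    refine Integrable.mono' (integrableOn_Ioi_rpow_of_lt (by linarith : -(4 * lam + 5) < -1) ha)
      hcont.aestronglyMeasurable.restrict ?_
    filter_upwards [ae_restrict_mem measurableSet_Ioi] with t htmem
    have htpos : 0 < t := lt_trans ha htmem
    rw [Real.norm_eq_abs, abs_of_nonneg (by rw [hψ]; positivity)]
    exact hbound t htmem
  have hunion : Set.Ioc (0:ℝ) a ∪ Set.Ioi a = Set.Ioi 0 := Set.Ioc_union_Ioi_eq_Ioi ha.le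
  constructor
  · rw [← hunion]; exact I1.union I2
  · rw [← hunion, setIntegral_union (Set.Ioc_disjoint_Ioi le_rfl) measurableSet_Ioi I1 I2]
    have B1 : ∫ t in Set.Ioc (0:ℝ) a, ψ t ≤ (1 / 4) * a ^ (-(4 * lam + 4)) := by
      have hmono : ∫ t in Set.Ioc (0:ℝ) a, ψ t ≤
          ∫ t in Set.Ioc (0:ℝ) a, t ^ 3 * (a ^ 2) ^ (-(2 * lam + 4)) := by
        refine setIntegral_mono_on I1 ?_ measurableSet_Ioc ?_
        · exact ((continuous_pow 3).mul continuous_const).integrableOn_Ioc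
        · intro t htmem
          rw [hψ]
          have h1 : (a ^ 2 + t ^ 2) ^ (-(2 * lam + 4)) ≤ (a ^ 2) ^ (-(2 * lam + 4)) :=
            Real.rpow_le_rpow_of_nonpos (by positivity) (by nlinarith [sq_nonneg t])
              (by linarith)
          exact mul_le_mul_of_nonneg_left h1 (pow_nonneg htmem.1.le 3)
      refine hmono.trans (le_of_eq ?_)
      rw [integral_mul_const, ← intervalIntegral.integral_of_le ha.le, integral_pow]
      rw [show ((a:ℝ) ^ (3+1) - 0 ^ (3+1)) / ((3:ℕ) + 1) = a ^ 4 / 4 from by norm_num]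
      rw [div_mul_eq_mul_div, ← Real.rpow_natCast a 4, ← Real.rpow_natCast a 2,
        ← Real.rpow_mul ha.le, ← Real.rpow_add ha]
      rw [show ((4:ℕ):ℝ) + (((2:ℕ):ℝ) * (-(2*lam+4))) = -(4*lam+4) from by push_cast; ring]
      ring
    have B2 : ∫ t in Set.Ioi a, ψ t ≤ (1 / (4 * lam + 4)) * a ^ (-(4 * lam + 4)) := by
      have hmono : ∫ t in Set.Ioi a, ψ t ≤ ∫ t in Set.Ioi a, t ^ (-(4 * lam + 5)) := by
        refine setIntegral_mono_on I2
          (integrableOn_Ioi_rpow_of_lt (by linarith : -(4 * lam + 5) < -1) ha)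
          measurableSet_Ioi ?_
        intro t htmem
        exact hbound t htmem
      refine hmono.trans ?_
      rw [integral_Ioi_rpow_of_lt (by linarith : -(4 * lam + 5) < -1) ha]
      rw [show (-(4 * lam + 5) + 1 : ℝ) = -(4 * lam + 4) from by ring]
      rw [neg_div_neg_eq]
      exact le_of_eq (by ring)
    linarith [B1, B2]

set_option maxHeartbeats 1000000 in
lemma pointwise_bound (lam x y t M : ℝ) (hlam : 0 < lam) (hx : 0 < x) (hy : 0 < y)
    (ht : 0 < t) (hxM : x ≤ M) (hyM : y ≤ M) (hoff : M / 2 ≤ |x - y|) :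
    ‖(t : ℂ) * DlamStar lam (fun u => ((besselPoissonKernel (lam + 1) t u y : ℝ) : ℂ)) x‖ ≤
      (2*lam*(lam+1) + 2*(lam+1)^2 + 48*(lam+1)*(lam+2)) * (x ^ lam * y ^ (lam+1)) *
        (t^2 * (((M/2)^2 + t^2) ^ (-(lam+2)))) := by
  have hM : 0 < M := lt_of_lt_of_le hx hxM
  set p : ℝ := lam + 2 with hpdef
  set q : ℝ := 2 * lam + 1 with hqdef
  have hp : 0 < p := by rw [hpdef]; linarith
  have hq : 0 ≤ q := by rw [hqdef]; linarith
  set Q : ℝ := (x - y) ^ 2 + t ^ 2 with hQdef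
  have hQ : 0 < Q := by rw [hQdef]; positivity
  set S : ℝ := (M / 2) ^ 2 + t ^ 2 with hSdef
  have hS : 0 < S := by rw [hSdef]; positivity
  have hSQ : S ≤ Q := by
    have h1 : (M / 2) ^ 2 ≤ |x - y| ^ 2 := by
      apply pow_le_pow_left₀ (by positivity) hoff
    rw [sq_abs] at h1
    rw [hSdef, hQdef]; linarith
  -- the inner integral as a function of u
  set IXf : ℝ → ℝ := fun u => ∫ θ in Set.Ioo 0 π, Real.sin θ ^ q * ((Dfn y t θ u) ^ p)⁻¹
    with hIXf
  set IXd : ℝ := ∫ θ in Set.Ioo 0 π, Ider y t p q x θ with hIXd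
  -- rewrite the function
  have hfun : (fun u : ℝ => u ^ lam * besselPoissonKernel (lam + 1) t u y) =
      (fun u : ℝ => u ^ lam * ((2 * (lam + 1) * (u * y) ^ (lam + 1) * t / π) * IXf u)) := by
    funext u
    simp only [besselPoissonKernel, hIXf, div_eq_mul_inv, Dfn, hpdef, hqdef,
      show 2 * (lam + 1) - 1 = 2 * lam + 1 from by ring,
      show lam + 1 + 1 = lam + 2 from by ring]
  -- derivative of the inner integral
  have hI : HasDerivAt IXf IXd x := by
    rw [hIXf, hIXd]
    exact I_hasDerivAt y t p q hy ht hq hp hx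
  -- the full real derivative
  have hG : HasDerivAt (fun u : ℝ => u ^ lam * besselPoissonKernel (lam + 1) t u y)
      (lam * x ^ (lam - 1) * ((2 * (lam + 1) * (x * y) ^ (lam + 1) * t / π) * IXf x)
        + x ^ lam * ((y * (lam + 1) * (x * y) ^ lam * (2 * (lam + 1)) * t / π) * IXf x
          + (2 * (lam + 1) * (x * y) ^ (lam + 1) * t / π) * IXd)) x := by
    rw [hfun]
    have h2 := ((hasDerivAt_id' x).mul_const y).rpow_const (p := lam + 1)
      (Or.inl (mul_pos hx hy).ne')
    have hKd := (((h2.const_mul (2 * (lam + 1))).mul_const t).div_const π).fun_mul hI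
    have h1 := Real.hasDerivAt_rpow_const (x := x) (p := lam) (Or.inl hx.ne')
    have hfin := h1.fun_mul hKd
    refine hfin.congr_deriv ?_
    simp only [show lam + 1 - 1 = lam from by ring]
    ring
  set d : ℝ := lam * x ^ (lam - 1) * ((2 * (lam + 1) * (x * y) ^ (lam + 1) * t / π) * IXf x)
        + x ^ lam * ((y * (lam + 1) * (x * y) ^ lam * (2 * (lam + 1)) * t / π) * IXf x
          + (2 * (lam + 1) * (x * y) ^ (lam + 1) * t / π) * IXd) with hddef
  -- complex derivative
  have hGc : HasDerivAt (fun u : ℝ =>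
      ((u ^ lam : ℝ) : ℂ) * ((besselPoissonKernel (lam + 1) t u y : ℝ) : ℂ)) ((d : ℝ) : ℂ) x := by
    simpa only [Complex.ofReal_mul] using hG.ofReal_comp
  -- norm computation
  have hnorm : ‖(t : ℂ) * DlamStar lam
      (fun u => ((besselPoissonKernel (lam + 1) t u y : ℝ) : ℂ)) x‖ =
      t * (x ^ (-lam) * |d|) := by
    have hder : deriv (fun u : ℝ =>
        ((u ^ lam : ℝ) : ℂ) * ((besselPoissonKernel (lam + 1) t u y : ℝ) : ℂ)) x = ((d : ℝ) : ℂ) :=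
      hGc.deriv
    simp only [DlamStar]
    rw [hder]
    have : (t : ℂ) * (-((x ^ (-lam) : ℝ) : ℂ) * ((d : ℝ) : ℂ)) =
        (((-(t * (x ^ (-lam) * d)) : ℝ)) : ℂ) := by push_cast; ring
    rw [this, Complex.norm_real, Real.norm_eq_abs, abs_neg, abs_mul, abs_of_pos ht,
      abs_mul, abs_of_pos (Real.rpow_pos_of_pos hx (-lam))]
  rw [hnorm]
  -- bounds on the integrals
  have hIXb : |IXf x| ≤ π * Q ^ (-p) := by
    have h := Iint_bound (y := y) (t := t) (p := p) (q := q) (x := x) hy ht hq hp hx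
    rw [← hQdef] at h
    simpa [hIXf] using h
  have hxyM : |x - y| ≤ M := by
    rw [abs_le]; constructor <;> linarith
  have hIXdb : |IXd| ≤ π * (p * Q ^ (-(p + 1)) * (6 * M)) := by
    have h := Ider_int_bound (y := y) (t := t) (p := p) (q := q) (x := x) (M := M)
      hy ht hq hp hx hxyM hyM
    rw [← hQdef] at h
    simpa [hIXd] using h
  set c1 : ℝ := lam * x ^ (lam - 1) * (2 * (lam + 1) * (x * y) ^ (lam + 1) * t / π) with hc1def
  set c2 : ℝ := x ^ lam * (y * (lam + 1) * (x * y) ^ lam * (2 * (lam + 1)) * t / π) with hc2def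
  set c3 : ℝ := x ^ lam * (2 * (lam + 1) * (x * y) ^ (lam + 1) * t / π) with hc3def
  have hc1 : (0:ℝ) ≤ c1 := by rw [hc1def]; positivity
  have hc2 : (0:ℝ) ≤ c2 := by rw [hc2def]; positivity
  have hc3 : (0:ℝ) ≤ c3 := by rw [hc3def]; positivity
  have hdle : |d| ≤ c1 * (π * Q ^ (-p)) +
      (c2 * (π * Q ^ (-p)) + c3 * (π * (p * Q ^ (-(p + 1)) * (6 * M)))) := by
    have e : d = c1 * IXf x + (c2 * IXf x + c3 * IXd) := by
      rw [hddef, hc1def, hc2def, hc3def]; ring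
    rw [e]
    refine (abs_add_le _ _).trans (add_le_add ?_ ((abs_add_le _ _).trans (add_le_add ?_ ?_)))
    · rw [abs_mul, abs_of_nonneg hc1]; exact mul_le_mul_of_nonneg_left hIXb hc1
    · rw [abs_mul, abs_of_nonneg hc2]; exact mul_le_mul_of_nonneg_left hIXb hc2
    · rw [abs_mul, abs_of_nonneg hc3]; exact mul_le_mul_of_nonneg_left hIXdb hc3
  have hstep : t * (x ^ (-lam) * |d|) ≤ t * (x ^ (-lam) * (c1 * (π * Q ^ (-p)) +
      (c2 * (π * Q ^ (-p)) + c3 * (π * (p * Q ^ (-(p + 1)) * (6 * M)))))) := by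
    have hxl : (0:ℝ) ≤ x ^ (-lam) := (Real.rpow_pos_of_pos hx _).le
    exact mul_le_mul_of_nonneg_left (mul_le_mul_of_nonneg_left hdle hxl) ht.le
  refine hstep.trans ?_
  -- algebraic identities, term by term
  have hrw : (∀ z : ℝ, z = z) := fun z => rfl
  have hQsplit : Q ^ (-(p + 1)) = Q ^ (-p) * Q⁻¹ := by
    rw [show (-(p + 1) : ℝ) = -p + (-1) from by ring, Real.rpow_add hQ, Real.rpow_neg_one]
  have hπ := Real.pi_ne_zero
  have hxl := (Real.rpow_pos_of_pos hx lam).ne'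
  have hT1 : t * (x ^ (-lam) * (c1 * (π * Q ^ (-p)))) =
      2 * lam * (lam + 1) * ((x ^ lam * y ^ (lam + 1)) * (t ^ 2 * Q ^ (-p))) := by
    rw [hc1def]
    rw [Real.mul_rpow hx.le hy.le, Real.rpow_add_one hx.ne', Real.rpow_add_one hy.ne',
      Real.rpow_sub hx, Real.rpow_one, Real.rpow_neg hx.le]
    field_simp
  have hT2 : t * (x ^ (-lam) * (c2 * (π * Q ^ (-p)))) =
      2 * (lam + 1) ^ 2 * ((x ^ lam * y ^ (lam + 1)) * (t ^ 2 * Q ^ (-p))) := by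
    rw [hc2def]
    rw [Real.mul_rpow hx.le hy.le, Real.rpow_add_one hy.ne', Real.rpow_neg hx.le]
    field_simp
  have hT3 : t * (x ^ (-lam) * (c3 * (π * (p * Q ^ (-(p + 1)) * (6 * M))))) =
      12 * (lam + 1) * p * ((x ^ lam * y ^ (lam + 1)) * (t ^ 2 * Q ^ (-p))) * (M * x * Q⁻¹) := by
    rw [hc3def, hQsplit]
    rw [Real.mul_rpow hx.le hy.le, Real.rpow_add_one hx.ne', Real.rpow_add_one hy.ne',
      Real.rpow_neg hx.le]
    field_simp
    ring
  have keyeq : t * (x ^ (-lam) * (c1 * (π * Q ^ (-p)) +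
      (c2 * (π * Q ^ (-p)) + c3 * (π * (p * Q ^ (-(p + 1)) * (6 * M)))))) =
      t * (x ^ (-lam) * (c1 * (π * Q ^ (-p)))) +
      (t * (x ^ (-lam) * (c2 * (π * Q ^ (-p)))) +
       t * (x ^ (-lam) * (c3 * (π * (p * Q ^ (-(p + 1)) * (6 * M)))))) := by ring
  rw [keyeq, hT1, hT2, hT3]
  -- final comparison
  have hQSp : Q ^ (-p) ≤ S ^ (-p) :=
    Real.rpow_le_rpow_of_nonpos hS hSQ (by linarith [hp])
  have hMxQ : M * x * Q⁻¹ ≤ 4 := by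
    have hQge : (M / 2) ^ 2 ≤ Q := by
      have : (M / 2) ^ 2 ≤ S := by rw [hSdef]; nlinarith [sq_nonneg t]
      exact le_trans this hSQ
    have hQinv : Q⁻¹ ≤ ((M / 2) ^ 2)⁻¹ := by
      apply inv_anti₀ (by positivity) hQge
    calc M * x * Q⁻¹ ≤ M * M * ((M / 2) ^ 2)⁻¹ := by
          apply mul_le_mul (mul_le_mul_of_nonneg_left hxM hM.le) hQinv
            (inv_nonneg.2 hQ.le) (by positivity)
      _ = 4 := by field_simp; ring
  have hXY : (0:ℝ) ≤ x ^ lam * y ^ (lam + 1) := by positivity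
  have h1 : (2 * lam * (lam + 1) + 2 * (lam + 1) ^ 2) *
      ((x ^ lam * y ^ (lam + 1)) * (t ^ 2 * Q ^ (-p))) ≤
      (2 * lam * (lam + 1) + 2 * (lam + 1) ^ 2) *
      ((x ^ lam * y ^ (lam + 1)) * (t ^ 2 * S ^ (-p))) := by
    have hco : (0:ℝ) ≤ 2 * lam * (lam + 1) + 2 * (lam + 1) ^ 2 := by positivity
    gcongr
  have h2 : 12 * (lam + 1) * p * ((x ^ lam * y ^ (lam + 1)) * (t ^ 2 * Q ^ (-p)))
      * (M * x * Q⁻¹) ≤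
      12 * (lam + 1) * p * ((x ^ lam * y ^ (lam + 1)) * (t ^ 2 * S ^ (-p))) * 4 := by
    have hA : (0:ℝ) ≤ 12 * (lam + 1) * p * ((x ^ lam * y ^ (lam + 1)) * (t ^ 2 * Q ^ (-p))) := by
      have := (Real.rpow_pos_of_pos hQ (-p)).le
      positivity
    calc 12 * (lam + 1) * p * ((x ^ lam * y ^ (lam + 1)) * (t ^ 2 * Q ^ (-p))) * (M * x * Q⁻¹)
        ≤ 12 * (lam + 1) * p * ((x ^ lam * y ^ (lam + 1)) * (t ^ 2 * Q ^ (-p))) * 4 :=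
          mul_le_mul_of_nonneg_left hMxQ hA
      _ ≤ 12 * (lam + 1) * p * ((x ^ lam * y ^ (lam + 1)) * (t ^ 2 * S ^ (-p))) * 4 := by
          gcongr
  calc 2 * lam * (lam + 1) * ((x ^ lam * y ^ (lam + 1)) * (t ^ 2 * Q ^ (-p))) +
      (2 * (lam + 1) ^ 2 * ((x ^ lam * y ^ (lam + 1)) * (t ^ 2 * Q ^ (-p))) +
       12 * (lam + 1) * p * ((x ^ lam * y ^ (lam + 1)) * (t ^ 2 * Q ^ (-p))) * (M * x * Q⁻¹))
      ≤ (2 * lam * (lam + 1) + 2 * (lam + 1) ^ 2) *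
          ((x ^ lam * y ^ (lam + 1)) * (t ^ 2 * S ^ (-p))) +
        12 * (lam + 1) * p * ((x ^ lam * y ^ (lam + 1)) * (t ^ 2 * S ^ (-p))) * 4 := by
        have := add_le_add h1 h2
        linarith [this]
    _ = (2 * lam * (lam + 1) + 2 * (lam + 1) ^ 2 + 48 * (lam + 1) * p) *
          (x ^ lam * y ^ (lam + 1)) * (t ^ 2 * S ^ (-p)) := by ring

/-- off-diagonal kernel estimate in the proof of Theorem 1.3:
for `y < x/2` or `y > 2x`, `(∫_0^∞ |t D_{λ,x}* P_t^{λ+1}(x,y)|² dt/t)^{1/2} ≤ C/max(x,y)`. -/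
theorem statement13 (lam : ℝ) (hlam : 0 < lam) :
    ∃ C > (0 : ℝ), ∀ x y : ℝ, 0 < x → 0 < y → (y < x / 2 ∨ 2 * x < y) →
      Real.sqrt (∫ t in Set.Ioi (0 : ℝ),
          ‖(t : ℂ) *
              DlamStar lam (fun u => ((besselPoissonKernel (lam + 1) t u y : ℝ) : ℂ)) x‖ ^ 2
            / t) ≤
        C / max x y := by
  set C0 : ℝ := 2 * lam * (lam + 1) + 2 * (lam + 1) ^ 2 + 48 * (lam + 1) * (lam + 2) with hC0
  have hC0pos : 0 < C0 := by rw [hC0]; positivity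
  set K : ℝ := C0 ^ 2 * ((1 / 4 + 1 / (4 * lam + 4)) * (2:ℝ) ^ (4 * lam + 4)) with hK
  have h2p : (0:ℝ) < (2:ℝ) ^ (4 * lam + 4) := Real.rpow_pos_of_pos (by norm_num) _
  have hKpos : 0 < K := by
    rw [hK]
    have h1 : (0:ℝ) < 1 / 4 + 1 / (4 * lam + 4) := by positivity
    positivity
  refine ⟨Real.sqrt K + 1, by positivity, ?_⟩
  intro x y hx hy hcase
  set M := max x y with hMdef
  have hxM : x ≤ M := le_max_left x y
  have hyM : y ≤ M := le_max_right x y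
  have hM : 0 < M := lt_of_lt_of_le hx hxM
  have hoff : M / 2 ≤ |x - y| := by
    rcases hcase with h | h
    · have hMx : M = x := by rw [hMdef]; exact max_eq_left (by linarith)
      rw [abs_of_pos (show (0:ℝ) < x - y by linarith), hMx]; linarith
    · have hMy : M = y := by rw [hMdef]; exact max_eq_right (by linarith)
      rw [abs_sub_comm, abs_of_pos (show (0:ℝ) < y - x by linarith), hMy]; linarith
  set a := M / 2 with hadef
  have ha : 0 < a := by rw [hadef]; positivity
  obtain ⟨hInt, hIval⟩ := psi_facts lam a hlam ha
  set A : ℝ := C0 * (x ^ lam * y ^ (lam + 1)) with hA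
  have hApos : 0 < A := by
    rw [hA]
    have h1 := Real.rpow_pos_of_pos hx lam
    have h2 := Real.rpow_pos_of_pos hy (lam + 1)
    positivity
  have hpt : ∀ t : ℝ, t ∈ Set.Ioi (0:ℝ) →
      ‖(t : ℂ) * DlamStar lam (fun u => ((besselPoissonKernel (lam + 1) t u y : ℝ) : ℂ)) x‖ ≤
        A * (t ^ 2 * ((a ^ 2 + t ^ 2) ^ (-(lam + 2)))) := by
    intro t htpos
    have h := pointwise_bound lam x y t M hlam hx hy htpos hxM hyM hoff
    refine h.trans (le_of_eq ?_)
    rw [hA, hC0, hadef]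
  -- comparison of integrals
  have hg_int : Integrable (fun t : ℝ => A ^ 2 * (t ^ 3 * ((a ^ 2 + t ^ 2) ^ (-(2 * lam + 4)))))
      (volume.restrict (Set.Ioi 0)) := hInt.const_mul (A ^ 2)
  have hf0 : 0 ≤ᵐ[volume.restrict (Set.Ioi (0:ℝ))] fun t : ℝ =>
      ‖(t : ℂ) * DlamStar lam (fun u => ((besselPoissonKernel (lam + 1) t u y : ℝ) : ℂ)) x‖ ^ 2
        / t := by
    filter_upwards [ae_restrict_mem measurableSet_Ioi] with t ht
    have htpos : (0:ℝ) < t := ht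
    positivity
  have hfg : (fun t : ℝ =>
      ‖(t : ℂ) * DlamStar lam (fun u => ((besselPoissonKernel (lam + 1) t u y : ℝ) : ℂ)) x‖ ^ 2
        / t) ≤ᵐ[volume.restrict (Set.Ioi (0:ℝ))]
      fun t : ℝ => A ^ 2 * (t ^ 3 * ((a ^ 2 + t ^ 2) ^ (-(2 * lam + 4)))) := by
    filter_upwards [ae_restrict_mem measurableSet_Ioi] with t ht
    have htpos : (0:ℝ) < t := ht
    have h1 := hpt t ht
    have hpos2 : (0:ℝ) < a ^ 2 + t ^ 2 := by positivity
    have h2 : ‖(t : ℂ) * DlamStar lam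
        (fun u => ((besselPoissonKernel (lam + 1) t u y : ℝ) : ℂ)) x‖ ^ 2 ≤
        (A * (t ^ 2 * ((a ^ 2 + t ^ 2) ^ (-(lam + 2))))) ^ 2 :=
      pow_le_pow_left₀ (norm_nonneg _) h1 2
    have h3 : ‖(t : ℂ) * DlamStar lam
        (fun u => ((besselPoissonKernel (lam + 1) t u y : ℝ) : ℂ)) x‖ ^ 2 / t ≤
        (A * (t ^ 2 * ((a ^ 2 + t ^ 2) ^ (-(lam + 2))))) ^ 2 / t :=
      by gcongr
    refine h3.trans (le_of_eq ?_)
    have e1 : (((a ^ 2 + t ^ 2) ^ (-(lam + 2)))) ^ 2 = (a ^ 2 + t ^ 2) ^ (-(2 * lam + 4)) := by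
      rw [← Real.rpow_natCast ((a ^ 2 + t ^ 2) ^ (-(lam + 2))) 2,
        ← Real.rpow_mul hpos2.le]
      congr 1
      push_cast; ring
    rw [show (A * (t ^ 2 * ((a ^ 2 + t ^ 2) ^ (-(lam + 2))))) ^ 2 =
      A ^ 2 * ((t ^ 2) ^ 2 * (((a ^ 2 + t ^ 2) ^ (-(lam + 2)))) ^ 2) from by ring, e1,
      div_eq_iff htpos.ne']
    ring
  have hle := integral_mono_of_nonneg hf0 hg_int hfg
  have hgval : ∫ t in Set.Ioi (0:ℝ), A ^ 2 * (t ^ 3 * ((a ^ 2 + t ^ 2) ^ (-(2 * lam + 4)))) =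
      A ^ 2 * ∫ t in Set.Ioi (0:ℝ), t ^ 3 * ((a ^ 2 + t ^ 2) ^ (-(2 * lam + 4))) :=
    integral_const_mul _ _
  have hXY : x ^ lam * y ^ (lam + 1) ≤ M ^ (2 * lam + 1) := by
    have h1 : x ^ lam ≤ M ^ lam := Real.rpow_le_rpow hx.le hxM hlam.le
    have h2 : y ^ (lam + 1) ≤ M ^ (lam + 1) := Real.rpow_le_rpow hy.le hyM (by linarith)
    calc x ^ lam * y ^ (lam + 1) ≤ M ^ lam * M ^ (lam + 1) :=
          mul_le_mul h1 h2 (Real.rpow_nonneg hy.le _) (Real.rpow_nonneg hM.le _)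
      _ = M ^ (2 * lam + 1) := by
          rw [← Real.rpow_add hM]; congr 1; ring
  have hA2 : A ^ 2 ≤ C0 ^ 2 * M ^ (4 * lam + 2) := by
    have e : (M ^ (2 * lam + 1)) ^ 2 = M ^ (4 * lam + 2) := by
      rw [← Real.rpow_natCast (M ^ (2 * lam + 1)) 2, ← Real.rpow_mul hM.le]
      congr 1; push_cast; ring
    have h1 : (x ^ lam * y ^ (lam + 1)) ^ 2 ≤ (M ^ (2 * lam + 1)) ^ 2 := by
      apply pow_le_pow_left₀ (by positivity) hXY
    calc A ^ 2 = C0 ^ 2 * (x ^ lam * y ^ (lam + 1)) ^ 2 := by rw [hA]; ring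
      _ ≤ C0 ^ 2 * (M ^ (2 * lam + 1)) ^ 2 := by gcongr
      _ = C0 ^ 2 * M ^ (4 * lam + 2) := by rw [e]
  have ha4 : a ^ (-(4 * lam + 4)) = 2 ^ (4 * lam + 4) * M ^ (-(4 * lam + 4)) := by
    rw [hadef, Real.div_rpow hM.le (by norm_num : (0:ℝ) ≤ 2), div_eq_mul_inv,
      Real.rpow_neg (by norm_num : (0:ℝ) ≤ 2), inv_inv]
    ring
  have hMM : M ^ (4 * lam + 2) * M ^ (-(4 * lam + 4)) = (M ^ 2)⁻¹ := by
    rw [← Real.rpow_add hM, show (4 * lam + 2) + -(4 * lam + 4) = (-2:ℝ) from by ring,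
      show (-2:ℝ) = -((2:ℕ):ℝ) from by norm_num, Real.rpow_neg hM.le, Real.rpow_natCast]
  have hend : (∫ t in Set.Ioi (0:ℝ),
      ‖(t : ℂ) * DlamStar lam (fun u => ((besselPoissonKernel (lam + 1) t u y : ℝ) : ℂ)) x‖ ^ 2
        / t) ≤ ((Real.sqrt K + 1) / M) ^ 2 := by
    have hc1 : (0:ℝ) ≤ 1 / 4 + 1 / (4 * lam + 4) := by positivity
    have ha40 : (0:ℝ) ≤ a ^ (-(4 * lam + 4)) := Real.rpow_nonneg ha.le _
    calc (∫ t in Set.Ioi (0:ℝ),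
        ‖(t : ℂ) * DlamStar lam
          (fun u => ((besselPoissonKernel (lam + 1) t u y : ℝ) : ℂ)) x‖ ^ 2 / t)
        ≤ ∫ t in Set.Ioi (0:ℝ), A ^ 2 * (t ^ 3 * ((a ^ 2 + t ^ 2) ^ (-(2 * lam + 4)))) := hle
      _ = A ^ 2 * ∫ t in Set.Ioi (0:ℝ), t ^ 3 * ((a ^ 2 + t ^ 2) ^ (-(2 * lam + 4))) := hgval
      _ ≤ A ^ 2 * ((1 / 4 + 1 / (4 * lam + 4)) * a ^ (-(4 * lam + 4))) :=
          mul_le_mul_of_nonneg_left hIval (sq_nonneg A)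
      _ ≤ (C0 ^ 2 * M ^ (4 * lam + 2)) * ((1 / 4 + 1 / (4 * lam + 4)) * a ^ (-(4 * lam + 4))) :=
          mul_le_mul_of_nonneg_right hA2 (mul_nonneg hc1 ha40)
      _ = K * (M ^ 2)⁻¹ := by
          rw [ha4, hK, ← hMM]; ring
      _ ≤ ((Real.sqrt K + 1) / M) ^ 2 := by
          rw [div_pow, div_eq_mul_inv]
          apply mul_le_mul_of_nonneg_right ?_ (inv_nonneg.2 (sq_nonneg M))
          nlinarith [Real.sq_sqrt hKpos.le, Real.sqrt_nonneg K]
  have hfin := Real.sqrt_le_sqrt hend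
  rwa [Real.sqrt_sq (by positivity : (0:ℝ) ≤ (Real.sqrt K + 1) / M)] at hfin
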